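/- arXiv:1103.0575 — 3 statements merged into one kernel-verified Lean document; each statement's English description precedes it below -/
import Mathlib

section
/- For every n ∈ ℕ, every 0 ≤ k ≤ l ≤ n and every probability measure P ∈ 𝒫ⁿ_D, one has E^P[(Xⁿ_l − Xⁿ_k)(Xⁿ_l − Xⁿ_k)' | Fⁿ_k] ∈ (l−k)·D := {(l−k)Γ : Γ ∈ D} P-almost surely. -/
open MeasureTheory
open scoped ENNReal

noncomputable section
open scoped Pointwise

/-- Column vectors in `ℝ^d` with the Euclidean norm. -/
abbrev Vec (d : ℕ) := EuclideanSpace ℝ (Fin d)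

/-- Real `d × d` matrices. -/
abbrev Mat (d : ℕ) := Matrix (Fin d) (Fin d) ℝ

/-- Operator norm of a matrix, acting on Euclidean space. -/
def matOpNorm {d : ℕ} (A : Mat d) : ℝ :=
  ‖LinearMap.toContinuousLinearMap (Matrix.toEuclideanLin A)‖

/-- `R_D`, the supremum of the operator norms of the elements of `D`. -/
def RD {d : ℕ} (D : Set (Mat d)) : ℝ := sSup (matOpNorm '' D)

/-- `r_D`; note that for a non-invertible `Γ` we have `Γ⁻¹ = 0` (Mathlib's junk value)
and hence `(matOpNorm Γ⁻¹)⁻¹ = 0`, matching the convention `r_D = 0` in that case. -/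
def rD {d : ℕ} (D : Set (Mat d)) : ℝ := sInf ((fun A => (matOpNorm A⁻¹)⁻¹) '' D)

/-- The canonical space `(ℝ^d)^{n+1}` of discrete paths. -/
abbrev PathN (d n : ℕ) := Fin (n + 1) → Vec d

/-- The canonical filtration `F^n_k = σ(X^n_0, …, X^n_k)`. -/
def canonF (d n : ℕ) (k : Fin (n + 1)) : MeasurableSpace (PathN d n) :=
  ⨆ i : Fin (n + 1), ⨆ _ : i ≤ k, MeasurableSpace.comap (fun ω => ω i) inferInstance

/-- `P` is a martingale law on `(ℝ^d)^{n+1}`: the canonical process is a `P`-martingale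
(w.r.t. the canonical filtration) starting at `0` `P`-a.s. -/
def IsMartingaleLaw (d n : ℕ) (P : Measure (PathN d n)) : Prop :=
  IsProbabilityMeasure P ∧
  (∀ᵐ ω ∂P, ω 0 = 0) ∧
  (∀ k, Integrable (fun ω => ω k) P) ∧
  ∀ k l : Fin (n + 1), k ≤ l →
    (P[fun ω => ω l | canonF d n k]) =ᵐ[P] fun ω => ω k

/-- The set `𝒫ⁿ_D` of martingale laws with one-step conditional covariances in `D`
and increments of squared Euclidean length in `[d² r_D, d² R_D]`. -/
def PLaws (d n : ℕ) (D : Set (Mat d)) : Set (Measure (PathN d n)) :=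
  {P | IsMartingaleLaw d n P ∧
    ∀ k : ℕ, ∀ hk : k < n,
      (∀ᵐ ω ∂P,
        (Matrix.of fun i j =>
          (P[fun ω' => (ω' ⟨k + 1, by omega⟩ i - ω' ⟨k, by omega⟩ i) *
                        (ω' ⟨k + 1, by omega⟩ j - ω' ⟨k, by omega⟩ j)
            | canonF d n ⟨k, by omega⟩]) ω) ∈ D) ∧
      (∀ᵐ ω ∂P,
        (d : ℝ) ^ 2 * rD D ≤ ‖ω ⟨k + 1, by omega⟩ - ω ⟨k, by omega⟩‖ ^ 2 ∧
        ‖ω ⟨k + 1, by omega⟩ - ω ⟨k, by omega⟩‖ ^ 2 ≤ (d : ℝ) ^ 2 * RD D)}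



-- ===== auxiliary lemmas =====

instance (d : ℕ) : LocallyConvexSpace ℝ (Mat d) :=
  inferInstanceAs (LocallyConvexSpace ℝ (Fin d → Fin d → ℝ))

/-- rational linear functional -/
def ratL {d : ℕ} (c : Fin d → Fin d → ℚ) (y : Mat d) : ℝ :=
  ∑ i, ∑ j, (c i j : ℝ) * y i j

lemma continuous_entry {d : ℕ} (i j : Fin d) : Continuous fun y : Mat d => y i j :=
  (continuous_apply j).comp (continuous_apply (A := fun _ : Fin d => Fin d → ℝ) i)

lemma continuous_ratL {d : ℕ} (c : Fin d → Fin d → ℚ) : Continuous (ratL c) := by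
  refine continuous_finset_sum _ fun i _ => continuous_finset_sum _ fun j _ => ?_
  exact continuous_const.mul (continuous_entry i j)

/-- support function value -/
def ratS {d : ℕ} (D : Set (Mat d)) (c : Fin d → Fin d → ℚ) : ℝ := sSup (ratL c '' D)

lemma mem_of_forall_ratL {d : ℕ} {D : Set (Mat d)} (hne : D.Nonempty) (hconv : Convex ℝ D)
    (hcomp : IsCompact D) (x : Mat d)
    (hx : ∀ c : Fin d → Fin d → ℚ, ratL c x ≤ ratS D c) : x ∈ D := by
  by_contra hxD
  obtain ⟨f, u, hfD, hux⟩ := geometric_hahn_banach_closed_point hconv hcomp.isClosed hxD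
  -- coefficients of f
  set a : Fin d → Fin d → ℝ := fun i j => f (Matrix.single i j 1) with ha
  have hf_eq : ∀ y : Mat d, f y = ∑ i, ∑ j, y i j * a i j := by
    intro y
    conv_lhs => rw [Matrix.matrix_eq_sum_single y]
    rw [map_sum]
    refine Finset.sum_congr rfl fun i _ => ?_
    rw [map_sum]
    refine Finset.sum_congr rfl fun j _ => ?_
    have : Matrix.single i j (y i j) = y i j • Matrix.single i j 1 := by
      rw [Matrix.smul_single, smul_eq_mul, mul_one]
    rw [this, _root_.map_smul, smul_eq_mul, ha]
  -- coordinate bound on D and x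
  obtain ⟨M, hM⟩ : ∃ M : ℝ, ∀ y ∈ D, ∀ i j, |y i j| ≤ M := by
    have hc : Continuous fun y : Mat d => ∑ i, ∑ j, |y i j| :=
      continuous_finset_sum _ fun i _ => continuous_finset_sum _ fun j _ =>
        (continuous_entry i j).abs
    obtain ⟨M, hM⟩ := (hcomp.image hc).bddAbove
    refine ⟨M, fun y hy i j => ?_⟩
    have h1 : ∑ i', ∑ j', |y i' j'| ≤ M := hM ⟨y, hy, rfl⟩
    refine le_trans ?_ h1
    calc |y i j| ≤ ∑ j', |y i j'| :=
          Finset.single_le_sum (f := fun j' => |y i j'|) (fun j' _ => abs_nonneg _)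
            (Finset.mem_univ j)
      _ ≤ ∑ i', ∑ j', |y i' j'| :=
          Finset.single_le_sum (f := fun i' => ∑ j', |y i' j'|)
            (fun i' _ => Finset.sum_nonneg fun j' _ => abs_nonneg _) (Finset.mem_univ i)
  obtain ⟨y0, hy0⟩ := hne
  have hM0 : 0 ≤ M := by
    rcases Nat.eq_zero_or_pos d with h | h
    · subst h
      exact absurd (Matrix.ext fun i _ => i.elim0 : x = y0) fun hh => hxD (hh ▸ hy0)
    · exact le_trans (abs_nonneg _) (hM y0 hy0 ⟨0, h⟩ ⟨0, h⟩)
  set M' : ℝ := max M (∑ i, ∑ j, |x i j|) with hM'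
  have hM'0 : 0 ≤ M' := le_trans hM0 (le_max_left _ _)
  have hMx : ∀ i j, |x i j| ≤ M' := by
    intro i j
    refine le_trans ?_ (le_max_right _ _)
    calc |x i j| ≤ ∑ j', |x i j'| :=
          Finset.single_le_sum (f := fun j' => |x i j'|) (fun j' _ => abs_nonneg _)
            (Finset.mem_univ j)
      _ ≤ ∑ i', ∑ j', |x i' j'| :=
          Finset.single_le_sum (f := fun i' => ∑ j', |x i' j'|)
            (fun i' _ => Finset.sum_nonneg fun j' _ => abs_nonneg _) (Finset.mem_univ i)
  have hMD : ∀ y ∈ D, ∀ i j, |y i j| ≤ M' := fun y hy i j =>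
    le_trans (hM y hy i j) (le_max_left _ _)
  set ε : ℝ := f x - u with hε
  have hε0 : 0 < ε := by simp [hε]; linarith
  set δ : ℝ := ε / (3 * ((d : ℝ) ^ 2 * M' + 1)) with hδ
  have hden : 0 < (d : ℝ) ^ 2 * M' + 1 := by positivity
  have hδ0 : 0 < δ := by positivity
  choose q hq using fun i j : Fin d => exists_rat_near (a i j) hδ0
  have key : ∀ y : Mat d, (∀ i j, |y i j| ≤ M') → |ratL q y - f y| ≤ ε / 3 := by
    intro y hy
    rw [hf_eq y, ratL, ← Finset.sum_sub_distrib]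
    have h1 : |∑ i, (∑ j, ((q i j : ℝ) * y i j) - ∑ j, y i j * a i j)| ≤
        ∑ i, ∑ j, |y i j| * |a i j - (q i j : ℝ)| := by
      refine le_trans (Finset.abs_sum_le_sum_abs _ _) (Finset.sum_le_sum fun i _ => ?_)
      rw [← Finset.sum_sub_distrib]
      refine le_trans (Finset.abs_sum_le_sum_abs _ _) (Finset.sum_le_sum fun j _ => ?_)
      have : (q i j : ℝ) * y i j - y i j * a i j = -(y i j * (a i j - (q i j : ℝ))) := by ring
      rw [this, abs_neg, abs_mul]
    refine le_trans h1 ?_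
    have h2 : ∑ i, ∑ j, |y i j| * |a i j - (q i j : ℝ)| ≤ ∑ _i : Fin d, ∑ _j : Fin d, M' * δ := by
      refine Finset.sum_le_sum fun i _ => Finset.sum_le_sum fun j _ => ?_
      exact mul_le_mul (hy i j) (le_of_lt (hq i j)) (abs_nonneg _) hM'0
    refine le_trans h2 ?_
    rw [Finset.sum_const, Finset.sum_const, Finset.card_univ, Fintype.card_fin, nsmul_eq_mul,
      nsmul_eq_mul]
    have : (d : ℝ) * ((d : ℝ) * (M' * δ)) = ((d : ℝ) ^ 2 * M') * δ := by ring
    rw [this, hδ]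
    calc (d : ℝ) ^ 2 * M' * (ε / (3 * ((d : ℝ) ^ 2 * M' + 1)))
        ≤ ((d : ℝ) ^ 2 * M' + 1) * (ε / (3 * ((d : ℝ) ^ 2 * M' + 1))) := by
          refine mul_le_mul_of_nonneg_right (by linarith) (by positivity)
      _ = ε / 3 := by field_simp
  have hSx : ratS D q ≤ u + ε / 3 := by
    refine csSup_le ((Set.nonempty_of_mem hy0).image _) ?_
    rintro r ⟨y, hy, rfl⟩
    have := key y (hMD y hy)
    have := hfD y hy
    have := abs_sub_le_iff.mp (key y (hMD y hy))
    linarith [this.1]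
  have hxq : u + 2 * ε / 3 ≤ ratL q x := by
    have := abs_sub_le_iff.mp (key x hMx)
    have hfx : f x = u + ε := by rw [hε]; ring
    linarith [this.1, this.2]
  have := hx q
  linarith

open scoped ENNReal

lemma condexp_matrix_mem {d : ℕ} {Ω : Type*} {m m0 : MeasurableSpace Ω} {P : Measure Ω}
    [IsProbabilityMeasure P] (hm : m ≤ m0)
    {D : Set (Mat d)} (hne : D.Nonempty) (hconv : Convex ℝ D) (hcomp : IsCompact D)
    {g : Ω → Mat d} (hint : ∀ i j, Integrable (fun ω => g ω i j) P)
    (hmem : ∀ᵐ ω ∂P, g ω ∈ D) :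
    ∀ᵐ ω ∂P, (Matrix.of fun i j => (P[fun ω' => g ω' i j|m]) ω) ∈ D := by
  have key : ∀ c : Fin d → Fin d → ℚ,
      ∀ᵐ ω ∂P, ratL c (Matrix.of fun i j => (P[fun ω' => g ω' i j|m]) ω) ≤ ratS D c := by
    intro c
    set F : (Fin d × Fin d) → Ω → ℝ := fun p ω => (c p.1 p.2 : ℝ) • g ω p.1 p.2 with hF
    have hint' : ∀ p : Fin d × Fin d, Integrable (F p) P :=
      fun p => ((hint p.1 p.2).smul (c p.1 p.2 : ℝ))
    have hsum := condExp_finsetSum (μ := P) (m := m) (f := F)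
      (s := Finset.univ) (fun p _ => hint' p)
    have hLg : Integrable (∑ p : Fin d × Fin d, F p) P :=
      integrable_finset_sum' _ fun p _ => hint' p
    have hbound : (∑ p : Fin d × Fin d, F p) ≤ᵐ[P] fun _ => ratS D c := by
      filter_upwards [hmem] with ω hω
      have he : (∑ p : Fin d × Fin d, F p) ω = ratL c (g ω) := by
        rw [Finset.sum_apply, ratL, hF]
        simp [Fintype.sum_prod_type, smul_eq_mul]
      show (∑ p : Fin d × Fin d, F p) ω ≤ ratS D c
      rw [he]
      exact le_csSup (hcomp.image (continuous_ratL c)).bddAbove ⟨g ω, hω, rfl⟩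
    have hmono := condExp_mono (m := m) hLg (integrable_const (ratS D c)) hbound
    have hps : ∀ᵐ ω ∂P, ∀ p : Fin d × Fin d,
        (P[F p|m]) ω = (c p.1 p.2 : ℝ) • (P[fun ω' => g ω' p.1 p.2|m]) ω := by
      rw [ae_all_iff]
      intro p
      have := condExp_smul (μ := P) (m := m) (c p.1 p.2 : ℝ) (fun ω' => g ω' p.1 p.2)
      filter_upwards [this] with ω hω
      exact hω
    filter_upwards [hmono, hsum, hps] with ω h1 h2 h3
    calc ratL c (Matrix.of fun i j => (P[fun ω' => g ω' i j|m]) ω)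
        = ∑ p : Fin d × Fin d, (c p.1 p.2 : ℝ) * (P[fun ω' => g ω' p.1 p.2|m]) ω := by
          rw [ratL]
          simp [Fintype.sum_prod_type]
      _ = ∑ p : Fin d × Fin d, (P[F p|m]) ω :=
          Finset.sum_congr rfl fun p _ => by rw [h3 p, smul_eq_mul]
      _ = (∑ p : Fin d × Fin d, P[F p|m]) ω := (Finset.sum_apply _ _ _).symm
      _ = (P[∑ p : Fin d × Fin d, F p|m]) ω := h2.symm
      _ ≤ (P[fun _ => ratS D c|m]) ω := h1
      _ = ratS D c := by rw [condExp_const hm]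
  have hall : ∀ᵐ ω ∂P, ∀ c : Fin d → Fin d → ℚ,
      ratL c (Matrix.of fun i j => (P[fun ω' => g ω' i j|m]) ω) ≤ ratS D c :=
    ae_all_iff.mpr key
  filter_upwards [hall] with ω hω
  exact mem_of_forall_ratL hne hconv hcomp _ hω


lemma condexp_comp_clm {α : Type*} {m m0 : MeasurableSpace α} {μ : Measure α}
    (hm : m ≤ m0) [SigmaFinite (μ.trim hm)]
    {E F : Type*} [NormedAddCommGroup E] [NormedSpace ℝ E] [CompleteSpace E]
    [NormedAddCommGroup F] [NormedSpace ℝ F] [CompleteSpace F]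
    (T : E →L[ℝ] F) {f : α → E} (hf : Integrable f μ) :
    μ[fun ω => T (f ω)|m] =ᵐ[μ] fun ω => T ((μ[f|m]) ω) := by
  refine (ae_eq_condExp_of_forall_setIntegral_eq hm (T.integrable_comp hf)
    (fun s _ _ => (T.integrable_comp integrable_condExp).integrableOn)
    (fun s hs hμs => ?_)
    ((T.continuous.comp_stronglyMeasurable stronglyMeasurable_condExp).aestronglyMeasurable)).symm
  rw [T.integral_comp_comm integrable_condExp.integrableOn,
    T.integral_comp_comm hf.integrableOn, setIntegral_condExp hm hf hs]

lemma smul_add_mem_smul_image {d : ℕ} {D : Set (Mat d)} (hconv : Convex ℝ D) {r : ℝ}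
    (hr : 0 ≤ r) {A B : Mat d} (hA : A ∈ D) (hB : B ∈ D) :
    ∃ C ∈ D, (r + 1) • C = r • A + B := by
  have h : r • A + B ∈ (r + 1) • D := by
    rw [hconv.add_smul hr zero_le_one]
    exact Set.add_mem_add (Set.smul_mem_smul_set hA) (Set.mem_smul_set.mpr ⟨B, hB, one_smul _ _⟩)
  obtain ⟨C, hC, hCe⟩ := Set.mem_smul_set.mp h
  exact ⟨C, hC, hCe⟩

lemma canonF_le (d n : ℕ) (j : Fin (n + 1)) :
    canonF d n j ≤ (inferInstance : MeasurableSpace (PathN d n)) := by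
  refine iSup_le fun i => iSup_le fun _ => ?_
  exact measurable_iff_comap_le.mp (measurable_pi_apply i)

lemma coord_meas_canonF (d n : ℕ) (j p : Fin (n + 1)) (hp : p ≤ j) (i : Fin d) :
    Measurable[canonF d n j] fun ω : PathN d n => ω p i := by
  have h1 : Measurable[canonF d n j] fun ω : PathN d n => ω p :=
    measurable_iff_comap_le.mpr (le_iSup₂ (f := fun i' (_ : i' ≤ j) =>
      MeasurableSpace.comap (fun ω : PathN d n => ω i') inferInstance) p hp)
  exact ((EuclideanSpace.proj (𝕜 := ℝ) i).continuous.measurable).comp h1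

lemma coord_abs_le_norm (d : ℕ) (v : Vec d) (i : Fin d) : |v i| ≤ ‖v‖ := by
  rw [EuclideanSpace.norm_eq]
  have h : |v i| = Real.sqrt (‖v i‖ ^ 2) := by
    rw [Real.sqrt_sq_eq_abs]; simp [Real.norm_eq_abs, abs_abs]
  rw [h]
  exact Real.sqrt_le_sqrt (Finset.single_le_sum (f := fun j => ‖v j‖ ^ 2)
    (fun j _ => sq_nonneg _) (Finset.mem_univ i))
-- ===== end auxiliary lemmas =====

/-- Lemma 3.1(iii): for every `n`, `0 ≤ k ≤ l ≤ n` and `P ∈ 𝒫ⁿ_D`,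
`E^P[(Xⁿ_l − Xⁿ_k)(Xⁿ_l − Xⁿ_k)' | Fⁿ_k] ∈ (l−k)·D` `P`-a.s. -/
theorem discrete_conditional_covariance_mem (d : ℕ)
    (D : Set (Mat d)) (hne : D.Nonempty) (hconv : Convex ℝ D) (hcomp : IsCompact D)
    (hpsd : ∀ A ∈ D, A.PosSemidef)
    (n : ℕ) (k l : Fin (n + 1)) (hkl : k ≤ l)
    (P : Measure (PathN d n)) (hP : P ∈ PLaws d n D) :
    ∀ᵐ ω ∂P,
      (Matrix.of fun i j =>
          (P[fun ω' => (ω' l i - ω' k i) * (ω' l j - ω' k j) | canonF d n k]) ω)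
        ∈ (fun A : Mat d => ((((l : ℕ) : ℝ) - ((k : ℕ) : ℝ)) • A)) '' D := by
  classical
  obtain ⟨⟨hprob, hzero0, hintX, hmart⟩, hstepD⟩ := hP
  haveI : IsProbabilityMeasure P := hprob
  set B : ℝ := Real.sqrt ((d : ℝ) ^ 2 * RD D) with hB
  have hB0 : 0 ≤ B := Real.sqrt_nonneg _
  have hm_le : ∀ j : Fin (n + 1), canonF d n j ≤
      (inferInstance : MeasurableSpace (PathN d n)) := fun j => canonF_le d n j
  have hmono : ∀ {p q : Fin (n + 1)}, p ≤ q → canonF d n p ≤ canonF d n q := by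
    intro p q h
    refine iSup_le fun i => iSup_le fun hip => ?_
    exact le_iSup₂ (f := fun i' (_ : i' ≤ q) =>
      MeasurableSpace.comap (fun ω : PathN d n => ω i') inferInstance) i (le_trans hip h)
  have hm0coord : ∀ (p : Fin (n + 1)) (i : Fin d), Measurable fun ω : PathN d n => ω p i :=
    fun p i => ((EuclideanSpace.proj (𝕜 := ℝ) i).continuous.measurable).comp
      (measurable_pi_apply p)
  have hIntCoord : ∀ (p : Fin (n + 1)) (i : Fin d), Integrable (fun ω => ω p i) P :=
    fun p i => (EuclideanSpace.proj (𝕜 := ℝ) i).integrable_comp (hintX p)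
  have hstep_coord : ∀ (j : ℕ) (hj : j < n), ∀ᵐ ω ∂P, ∀ i : Fin d,
      |ω ⟨j + 1, by omega⟩ i - ω ⟨j, by omega⟩ i| ≤ B := by
    intro j hj
    filter_upwards [(hstepD j hj).2] with ω hω i
    have h3 : ‖ω ⟨j + 1, by omega⟩ - ω ⟨j, by omega⟩‖ ≤ B := by
      have h4 := Real.sqrt_le_sqrt hω.2
      rwa [Real.sqrt_sq (norm_nonneg _)] at h4
    exact le_trans (coord_abs_le_norm d (ω ⟨j + 1, by omega⟩ - ω ⟨j, by omega⟩) i) h3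
  have hbnd : ∀ (q : Fin (n + 1)) (p : ℕ), (q : ℕ) ≤ p → ∀ hpn : p ≤ n, ∀ᵐ ω ∂P, ∀ i : Fin d,
      |ω ⟨p, by omega⟩ i - ω q i| ≤ ((p : ℝ) - ((q : ℕ) : ℝ)) * B := by
    intro q
    refine Nat.le_induction ?_ ?_
    · intro hpn
      refine Filter.Eventually.of_forall fun ω i => ?_
      have hq : (⟨(q : ℕ), by omega⟩ : Fin (n + 1)) = q := rfl
      rw [hq, sub_self, abs_zero, sub_self, zero_mul]
    · intro p hqp ih hpn
      have hpn' : p ≤ n := by omega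
      filter_upwards [ih hpn', hstep_coord p (by omega)] with ω h1 h2 i
      have e : ω ⟨p + 1, by omega⟩ i - ω q i =
          (ω ⟨p + 1, by omega⟩ i - ω ⟨p, by omega⟩ i) + (ω ⟨p, by omega⟩ i - ω q i) := by ring
      calc |ω ⟨p + 1, by omega⟩ i - ω q i|
          ≤ |ω ⟨p + 1, by omega⟩ i - ω ⟨p, by omega⟩ i| + |ω ⟨p, by omega⟩ i - ω q i| := by
            rw [e]; exact abs_add_le _ _
        _ ≤ B + ((p : ℝ) - ((q : ℕ) : ℝ)) * B := add_le_add (h2 i) (h1 i)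
        _ = (((p + 1 : ℕ) : ℝ) - ((q : ℕ) : ℝ)) * B := by push_cast; ring
  have hbndF : ∀ (q p : Fin (n + 1)), q ≤ p → ∀ᵐ ω ∂P, ∀ i : Fin d,
      |ω p i - ω q i| ≤ (((p : ℕ) : ℝ) - ((q : ℕ) : ℝ)) * B := by
    intro q p hqp
    exact hbnd q (p : ℕ) hqp (by omega)
  have hcastn : ∀ p : Fin (n + 1), ((p : ℕ) : ℝ) ≤ (n : ℝ) := fun p => by
    exact_mod_cast Nat.lt_succ_iff.mp p.isLt
  have hInt2 : ∀ (p q p' q' : Fin (n + 1)), q ≤ p → q' ≤ p' → ∀ i i' : Fin d,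
      Integrable (fun ω => (ω p i - ω q i) * (ω p' i' - ω q' i')) P := by
    intro p q p' q' hqp hq'p' i i'
    have hmeas : AEStronglyMeasurable
        (fun ω : PathN d n => (ω p i - ω q i) * (ω p' i' - ω q' i')) P :=
      (((hm0coord p i).sub (hm0coord q i)).mul
        ((hm0coord p' i').sub (hm0coord q' i'))).aestronglyMeasurable
    refine Integrable.mono' (integrable_const (((n : ℝ) * B) * ((n : ℝ) * B))) hmeas ?_
    filter_upwards [hbndF q p hqp, hbndF q' p' hq'p'] with ω h1 h2
    rw [Real.norm_eq_abs, abs_mul]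
    have hb1 : |ω p i - ω q i| ≤ (n : ℝ) * B := le_trans (h1 i)
      (mul_le_mul_of_nonneg_right (by
        have ha := hcastn p
        have hb : (0 : ℝ) ≤ ((q : ℕ) : ℝ) := Nat.cast_nonneg _
        linarith) hB0)
    have hb2 : |ω p' i' - ω q' i'| ≤ (n : ℝ) * B := le_trans (h2 i')
      (mul_le_mul_of_nonneg_right (by
        have ha := hcastn p'
        have hb : (0 : ℝ) ≤ ((q' : ℕ) : ℝ) := Nat.cast_nonneg _
        linarith) hB0)
    exact mul_le_mul hb1 hb2 (abs_nonneg _) (by positivity)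
  have hmartC : ∀ (p q : Fin (n + 1)), q ≤ p → ∀ i : Fin d,
      P[fun ω => ω p i|canonF d n q] =ᵐ[P] fun ω => ω q i := by
    intro p q hqp i
    have h1 := condexp_comp_clm (hm_le q) (EuclideanSpace.proj (𝕜 := ℝ) i) (hintX p)
    refine h1.trans ?_
    filter_upwards [hmart q p hqp] with ω hω
    show EuclideanSpace.proj (𝕜 := ℝ) i ((P[fun ω' => ω' p|canonF d n q]) ω) = ω q i
    rw [hω]
    rfl
  have hdrift : ∀ (j : ℕ) (hj : j < n) (b : Fin d),
      P[fun ω => ω ⟨j + 1, by omega⟩ b - ω ⟨j, by omega⟩ b|canonF d n ⟨j, by omega⟩]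
        =ᵐ[P] fun _ => (0 : ℝ) := by
    intro j hj b
    have hsub := condExp_sub (μ := P) (m := canonF d n ⟨j, by omega⟩)
      (hIntCoord ⟨j + 1, by omega⟩ b) (hIntCoord ⟨j, by omega⟩ b)
    refine hsub.trans ?_
    have h1 := hmartC ⟨j + 1, by omega⟩ ⟨j, by omega⟩ (Fin.mk_le_mk.mpr (by omega)) b
    have h2 := hmartC ⟨j, by omega⟩ ⟨j, by omega⟩ le_rfl b
    filter_upwards [h1, h2] with ω e1 e2
    show (P[fun ω => ω ⟨j + 1, by omega⟩ b|canonF d n ⟨j, by omega⟩]) ω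
        - (P[fun ω => ω ⟨j, by omega⟩ b|canonF d n ⟨j, by omega⟩]) ω = 0
    rw [e1, e2, sub_self]
  have main : ∀ j : ℕ, (k : ℕ) ≤ j → ∀ hjn : j ≤ n, ∀ᵐ ω ∂P,
      (Matrix.of fun i i' =>
          (P[fun ω' => (ω' ⟨j, by omega⟩ i - ω' k i) * (ω' ⟨j, by omega⟩ i' - ω' k i')
            | canonF d n k]) ω)
        ∈ (fun A : Mat d => (((j : ℝ) - ((k : ℕ) : ℝ)) • A)) '' D := by
    intro j hkj
    induction j, hkj using Nat.le_induction with
    | base =>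
      intro hjn
      obtain ⟨y0, hy0⟩ := hne
      refine Filter.Eventually.of_forall fun ω => ⟨y0, hy0, ?_⟩
      show (((k : ℕ) : ℝ) - ((k : ℕ) : ℝ)) • y0 = _
      have h0 : (P[(fun _ : PathN d n => (0 : ℝ))|canonF d n k]) = 0 := condExp_zero
      ext i i'
      simp only [Matrix.smul_apply, sub_self, zero_smul, Matrix.of_apply, Fin.eta, zero_mul,
        h0, Pi.zero_apply]
    | succ j hkj ih =>
      intro hjn1
      have hj : j < n := hjn1
      have hjn' : j ≤ n := by omega
      have IH := ih hjn'
      set l : Fin (n + 1) := ⟨j, by omega⟩ with hldef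
      set l' : Fin (n + 1) := ⟨j + 1, by omega⟩ with hl'def
      have hkl' : k ≤ l := hkj
      have hll' : l ≤ l' := Nat.le_succ j
      have hkl'' : k ≤ l' := le_trans hkl' hll'
      set G : Fin d → Fin d → PathN d n → ℝ :=
        fun a b ω => (ω l a - ω k a) * (ω l b - ω k b) with hGdef
      set H : Fin d → Fin d → PathN d n → ℝ :=
        fun a b ω => (ω l' a - ω l a) * (ω l' b - ω l b) with hHdef
      set C : Fin d → Fin d → PathN d n → ℝ :=
        fun a b ω => (ω l a - ω k a) * (ω l' b - ω l b) with hCdef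
      set Ff : Fin d → Fin d → PathN d n → ℝ :=
        fun a b ω => (ω l' a - ω k a) * (ω l' b - ω k b) with hFdef
      set N : Fin d → Fin d → PathN d n → ℝ :=
        fun a b => P[H a b|canonF d n l] with hNdef
      have hGint : ∀ a b, Integrable (G a b) P := fun a b => hInt2 l k l k hkl' hkl' a b
      have hHint : ∀ a b, Integrable (H a b) P := fun a b => hInt2 l' l l' l hll' hll' a b
      have hCint : ∀ a b, Integrable (C a b) P := fun a b => hInt2 l k l' l hkl' hll' a b
      have hczero : ∀ a b : Fin d, P[C a b|canonF d n k] =ᵐ[P] fun _ => (0 : ℝ) := by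
        intro a b
        have hY : StronglyMeasurable[canonF d n l] fun ω : PathN d n => ω l a - ω k a :=
          ((coord_meas_canonF d n l l le_rfl a).sub
            (coord_meas_canonF d n l k hkl' a)).stronglyMeasurable
        have hg : Integrable (fun ω : PathN d n => ω l' b - ω l b) P :=
          (hIntCoord l' b).sub (hIntCoord l b)
        have hpull := condExp_mul_of_stronglyMeasurable_left (m := canonF d n l) hY
          (show Integrable ((fun ω : PathN d n => ω l a - ω k a)
              * fun ω : PathN d n => ω l' b - ω l b) P from hCint a b) hg
        have hdz : P[fun ω : PathN d n => ω l' b - ω l b|canonF d n l] =ᵐ[P]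
            fun _ => (0 : ℝ) := hdrift j hj b
        have hzero : ((fun ω : PathN d n => ω l a - ω k a)
            * P[fun ω : PathN d n => ω l' b - ω l b|canonF d n l]) =ᵐ[P]
            fun _ => (0 : ℝ) := by
          filter_upwards [hdz] with ω e
          show (ω l a - ω k a) * (P[fun ω : PathN d n => ω l' b - ω l b|canonF d n l]) ω = 0
          rw [e]
          exact mul_zero _
        have h1 : P[C a b|canonF d n l] =ᵐ[P] fun _ => (0 : ℝ) := hpull.trans hzero
        have h2 : P[P[C a b|canonF d n l]|canonF d n k] =ᵐ[P] P[C a b|canonF d n k] :=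
          condExp_condExp_of_le (hmono hkl') (hm_le l)
        refine h2.symm.trans ?_
        refine (condExp_congr_ae (m := canonF d n k) h1).trans ?_
        rw [show (fun _ : PathN d n => (0 : ℝ)) = (0 : PathN d n → ℝ) from rfl, condExp_zero]
      have hmid : ∀ a b : Fin d,
          P[N a b|canonF d n k] =ᵐ[P] P[H a b|canonF d n k] := fun a b =>
        condExp_condExp_of_le (hmono hkl') (hm_le l)
      have hpair : ∀ a b : Fin d, ∀ᵐ ω ∂P,
          (P[Ff a b|canonF d n k]) ω
            = (P[G a b|canonF d n k]) ω + (P[N a b|canonF d n k]) ω := by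
        intro a b
        have efun : Ff a b = ((G a b + H a b) + C b a) + C a b := by
          funext ω
          show Ff a b ω = ((G a b ω + H a b ω) + C b a ω) + C a b ω
          simp only [hGdef, hHdef, hCdef, hFdef]
          ring
        have e1 := condExp_add (μ := P) (m := canonF d n k)
          (((hGint a b).add (hHint a b)).add (hCint b a)) (hCint a b)
        have e2 := condExp_add (μ := P) (m := canonF d n k)
          ((hGint a b).add (hHint a b)) (hCint b a)
        have e3 := condExp_add (μ := P) (m := canonF d n k) (hGint a b) (hHint a b)
        filter_upwards [e1, e2, e3, hczero b a, hczero a b, hmid a b] with ω a1 a2 a3 z1 z2 md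
        have a1' : (P[((G a b + H a b) + C b a) + C a b|canonF d n k]) ω
            = (P[(G a b + H a b) + C b a|canonF d n k]) ω + (P[C a b|canonF d n k]) ω := a1
        have a2' : (P[(G a b + H a b) + C b a|canonF d n k]) ω
            = (P[G a b + H a b|canonF d n k]) ω + (P[C b a|canonF d n k]) ω := a2
        have a3' : (P[G a b + H a b|canonF d n k]) ω
            = (P[G a b|canonF d n k]) ω + (P[H a b|canonF d n k]) ω := a3
        have z1' : (P[C b a|canonF d n k]) ω = 0 := z1
        have z2' : (P[C a b|canonF d n k]) ω = 0 := z2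
        have md' : (P[N a b|canonF d n k]) ω = (P[H a b|canonF d n k]) ω := md
        have e0 : (P[Ff a b|canonF d n k]) ω
            = (P[((G a b + H a b) + C b a) + C a b|canonF d n k]) ω := by rw [efun]
        rw [e0, a1', a2', a3', z1', z2', md']
        ring
      have hpairAll : ∀ᵐ ω ∂P, ∀ a b : Fin d,
          (P[Ff a b|canonF d n k]) ω
            = (P[G a b|canonF d n k]) ω + (P[N a b|canonF d n k]) ω :=
        ae_all_iff.mpr fun a => ae_all_iff.mpr fun b => hpair a b
      have hDmem : ∀ᵐ ω ∂P, (fun ω' : PathN d n => Matrix.of fun a b => N a b ω') ω ∈ D :=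
        (hstepD j hj).1
      have hNmem := condexp_matrix_mem (m := canonF d n k) (hm_le k) hne hconv hcomp
        (g := fun ω' : PathN d n => Matrix.of fun a b => N a b ω')
        (fun a b => (integrable_condExp : Integrable (N a b) P)) hDmem
      filter_upwards [IH, hNmem, hpairAll] with ω hih hNω hpω
      obtain ⟨A, hA, hAeq⟩ := hih
      have hr0 : (0 : ℝ) ≤ (j : ℝ) - ((k : ℕ) : ℝ) := by
        have hc : ((k : ℕ) : ℝ) ≤ (j : ℝ) := by exact_mod_cast hkj
        linarith
      obtain ⟨A', hA', hA'eq⟩ := smul_add_mem_smul_image hconv hr0 hA hNω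
      refine ⟨A', hA', ?_⟩
      show (((j + 1 : ℕ) : ℝ) - ((k : ℕ) : ℝ)) • A' = _
      have hc2 : (((j + 1 : ℕ) : ℝ) - ((k : ℕ) : ℝ)) = ((j : ℝ) - ((k : ℕ) : ℝ)) + 1 := by
        push_cast; ring
      rw [hc2, hA'eq]
      have hAeq' : ((j : ℝ) - ((k : ℕ) : ℝ)) • A
          = Matrix.of (fun i i' =>
            (P[fun ω' => (ω' ⟨j, by omega⟩ i - ω' k i) * (ω' ⟨j, by omega⟩ i' - ω' k i')
              | canonF d n k]) ω) := hAeq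
      ext a b
      rw [Matrix.add_apply]
      have eg : (((j : ℝ) - ((k : ℕ) : ℝ)) • A) a b = (P[G a b|canonF d n k]) ω := by
        rw [hAeq']
        rfl
      rw [eg]
      exact (hpω a b).symm
  exact main (l : ℕ) hkl (Nat.lt_succ_iff.mp l.isLt)


end
end

section
/- Let D be a nonempty convex subset of the positive semidefinite real d×d matrices. Then D contains a positive definite (i.e., invertible) matrix if and only if ⋂_{Γ∈D} ker Γ = {0}. -/
open Matrix

noncomputable section

/-- step 0 of the proof of Proposition 3.8: a nonempty convex set `D` of
positive semidefinite real `d×d` matrices contains a positive definite (equivalently,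
invertible) matrix if and only if `⋂_{Γ ∈ D} ker Γ = {0}`. -/
theorem convex_posSemidef_exists_posDef_iff_inter_ker_eq_bot
    {d : ℕ} (D : Set (Matrix (Fin d) (Fin d) ℝ)) (hne : D.Nonempty) (hconv : Convex ℝ D)
    (hpsd : ∀ A ∈ D, A.PosSemidef) :
    (∃ Γ ∈ D, Γ.PosDef) ↔
      (⋂ Γ ∈ D, {x : Fin d → ℝ | Γ.mulVec x = 0}) = {0} := by
  classical
  constructor
  · rintro ⟨Γ, hΓD, hΓ⟩
    apply Set.eq_singleton_iff_unique_mem.mpr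
    refine ⟨Set.mem_iInter₂.mpr fun A _ => by simp [Matrix.mulVec_zero], ?_⟩
    intro x hx
    have hxΓ : Γ.mulVec x = 0 := Set.mem_iInter₂.mp hx Γ hΓD
    by_contra hx0
    have hpos := hΓ.dotProduct_mulVec_pos hx0
    rw [hxΓ] at hpos
    simp at hpos
  · intro hker
    -- pick Γ ∈ D minimizing the dimension of the kernel
    set K : Matrix (Fin d) (Fin d) ℝ → Submodule ℝ (Fin d → ℝ) :=
      fun A => LinearMap.ker A.mulVecLin with hK
    have hS : {n : ℕ | ∃ A ∈ D, Module.finrank ℝ (K A) = n}.Nonempty := by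
      obtain ⟨A, hA⟩ := hne
      exact ⟨_, A, hA, rfl⟩
    obtain ⟨Γ, hΓD, hΓrank⟩ := Nat.sInf_mem hS
    have hmin : ∀ B ∈ D, sInf {n : ℕ | ∃ A ∈ D, Module.finrank ℝ (K A) = n}
        ≤ Module.finrank ℝ (K B) := fun B hB => Nat.sInf_le ⟨B, hB, rfl⟩
    -- key claim: ker Γ ≤ ker A for all A ∈ D
    have hle : ∀ A ∈ D, K Γ ≤ K A := by
      intro A hA
      set B : Matrix (Fin d) (Fin d) ℝ := (1/2 : ℝ) • Γ + (1/2 : ℝ) • A with hB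
      have hBD : B ∈ D := hconv hΓD hA (by norm_num) (by norm_num) (by norm_num)
      have hkerB : K B ≤ K Γ ⊓ K A := by
        intro x hx
        have hx' : B.mulVec x = 0 := hx
        have hΓpsd := hpsd Γ hΓD
        have hApsd := hpsd A hA
        have h0 : (1/2 : ℝ) * (x ⬝ᵥ Γ.mulVec x) + (1/2 : ℝ) * (x ⬝ᵥ A.mulVec x) = 0 := by
          have := congrArg (fun v => x ⬝ᵥ v) hx'
          simpa [hB, Matrix.add_mulVec, Matrix.smul_mulVec, dotProduct_add,
            dotProduct_smul, smul_eq_mul] using this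
        have hΓnn : 0 ≤ x ⬝ᵥ Γ.mulVec x := by simpa using hΓpsd.dotProduct_mulVec_nonneg x
        have hAnn : 0 ≤ x ⬝ᵥ A.mulVec x := by simpa using hApsd.dotProduct_mulVec_nonneg x
        have hΓ0 : x ⬝ᵥ Γ.mulVec x = 0 := by nlinarith
        have hA0 : x ⬝ᵥ A.mulVec x = 0 := by nlinarith
        have h1 : Γ.mulVec x = 0 := (hΓpsd.dotProduct_mulVec_zero_iff x).mp (by simpa using hΓ0)
        have h2 : A.mulVec x = 0 := (hApsd.dotProduct_mulVec_zero_iff x).mp (by simpa using hA0)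
        exact ⟨h1, h2⟩
      have hkerB' : K B = K Γ := by
        refine Submodule.eq_of_le_of_finrank_le (le_trans hkerB inf_le_left) ?_
        rw [hΓrank]
        exact hmin B hBD
      rw [← hkerB']
      exact le_trans hkerB inf_le_right
    -- hence ker Γ = ⊥
    have hbot : K Γ = ⊥ := by
      rw [Submodule.eq_bot_iff]
      intro x hx
      have : x ∈ ⋂ A ∈ D, {y : Fin d → ℝ | A.mulVec y = 0} :=
        Set.mem_iInter₂.mpr fun A hA => hle A hA hx
      rw [hker] at this
      exact this
    refine ⟨Γ, hΓD, Matrix.PosDef.of_dotProduct_mulVec_pos (hpsd Γ hΓD).1 ?_⟩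
    intro x hx0
    have hΓpsd := hpsd Γ hΓD
    have hnn : 0 ≤ x ⬝ᵥ Γ.mulVec x := by simpa using hΓpsd.dotProduct_mulVec_nonneg x
    rcases lt_or_eq_of_le hnn with h | h
    · simpa using h
    · exfalso
      have : Γ.mulVec x = 0 := (hΓpsd.dotProduct_mulVec_zero_iff x).mp (by simpa using h.symm)
      exact hx0 ((Submodule.eq_bot_iff _).mp hbot x this)

end
end

section
/- Let D ⊆ S^d_+ be a nonempty, convex, compact set and let Π_D : S^d → D denote the metric projection onto D with respect to the Frobenius (Hilbert–Schmidt) norm ‖·‖_F. Then for every A ∈ S^d and every Γ ∈ D, one has ‖ √(Π_D(A)) − √Γ ‖² ≤ ‖ A − Γ ‖_F, where ‖·‖ is the operator norm and √ denotes the unique positive semidefinite square root of a positive semidefinite matrix. -/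
noncomputable section

/-- Frobenius (Hilbert–Schmidt) norm of a matrix. -/
def frobNorm {d : ℕ} (A : Mat d) : ℝ := Real.sqrt (∑ i, ∑ j, (A i j) ^ 2)

open scoped MatrixOrder

namespace SqrtProjAux

open Matrix
open scoped RealInnerProductSpace

lemma le_of_sq_le_sq {a b : ℝ} (ha : 0 ≤ a) (hb : 0 ≤ b) (h : a ^ 2 ≤ b ^ 2) : a ≤ b := by
  nlinarith

lemma frob_nonneg {d : ℕ} (A : Mat d) : 0 ≤ frobNorm A := Real.sqrt_nonneg _

lemma frob_sq {d : ℕ} (A : Mat d) : frobNorm A ^ 2 = ∑ i, ∑ j, (A i j) ^ 2 :=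
  Real.sq_sqrt (Finset.sum_nonneg fun _ _ => Finset.sum_nonneg fun _ _ => sq_nonneg _)

/-- Cauchy–Schwarz-type bound: `|xᵀ M x| ≤ ‖M‖_F` for a unit vector `x`. -/
lemma abs_dot_mulVec_le_frob {d : ℕ} (M : Mat d) (x : Fin d → ℝ)
    (hx : ∑ j, x j ^ 2 = 1) : |x ⬝ᵥ (M *ᵥ x)| ≤ frobNorm M := by
  set y := M *ᵥ x with hy
  have h1 : (x ⬝ᵥ y) ^ 2 ≤ (∑ j, x j ^ 2) * ∑ i, y i ^ 2 :=
    Finset.sum_mul_sq_le_sq_mul_sq Finset.univ x y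
  have h2 : ∑ i, y i ^ 2 ≤ ∑ i, ∑ j, M i j ^ 2 := by
    apply Finset.sum_le_sum
    intro i _
    have := Finset.sum_mul_sq_le_sq_mul_sq Finset.univ (fun j => M i j) x
    calc y i ^ 2 = (∑ j, M i j * x j) ^ 2 := by simp [hy, Matrix.mulVec, dotProduct]
      _ ≤ (∑ j, M i j ^ 2) * ∑ j, x j ^ 2 := this
      _ = ∑ j, M i j ^ 2 := by rw [hx, mul_one]
  have h3 : (x ⬝ᵥ y) ^ 2 ≤ frobNorm M ^ 2 := by
    rw [frob_sq]; calc (x ⬝ᵥ y) ^ 2 ≤ (∑ j, x j ^ 2) * ∑ i, y i ^ 2 := h1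
      _ = ∑ i, y i ^ 2 := by rw [hx, one_mul]
      _ ≤ _ := h2
  have := le_of_sq_le_sq (abs_nonneg (x ⬝ᵥ y)) (frob_nonneg M) (by rwa [sq_abs])
  exact this

/-- dot product against a symmetric matrix can be moved to the other side. -/
lemma dot_symm {d : ℕ} {M : Mat d} (hM : M.IsHermitian) (x w : Fin d → ℝ) :
    x ⬝ᵥ (M *ᵥ w) = (M *ᵥ x) ⬝ᵥ w := by
  have ht : Mᵀ = M := by
    ext i j
    have h := congrFun (congrFun hM i) j
    simpa using h
  rw [Matrix.dotProduct_mulVec]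
  congr 1
  rw [← Matrix.mulVec_transpose, ht]

lemma psd_dot_nonneg {d : ℕ} {M : Mat d} (hM : M.PosSemidef) (x : Fin d → ℝ) :
    0 ≤ x ⬝ᵥ (M *ᵥ x) := by
  simpa using hM.dotProduct_mulVec_nonneg x

/-- Frobenius norm as a Euclidean norm. -/
def matE (d : ℕ) : Mat d ≃ₗ[ℝ] EuclideanSpace ℝ (Fin d × Fin d) :=
  (LinearEquiv.curry ℝ ℝ (Fin d) (Fin d)).symm.trans
    (WithLp.linearEquiv 2 ℝ (Fin d × Fin d → ℝ)).symm

lemma norm_matE {d : ℕ} (A : Mat d) : ‖matE d A‖ = frobNorm A := by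
  rw [EuclideanSpace.norm_eq, frobNorm]
  congr 1
  have h1 : ∀ p : Fin d × Fin d, ‖matE d A p‖ ^ 2 = A p.1 p.2 ^ 2 := by
    intro p
    rw [Real.norm_eq_abs, sq_abs]
    rfl
  rw [Finset.sum_congr rfl fun p _ => h1 p, Fintype.sum_prod_type]

/-- The projection inequality: the metric projection is "farther" from other points of `D`. -/
lemma frob_proj_le {d : ℕ} (D : Set (Mat d)) (hconv : Convex ℝ D)
    (A PA Γ : Mat d) (hPA : PA ∈ D) (hΓ : Γ ∈ D)
    (hproj : ∀ B ∈ D, frobNorm (A - PA) ≤ frobNorm (A - B)) :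
    frobNorm (PA - Γ) ≤ frobNorm (A - Γ) := by
  set e := matE d
  set K : Set (EuclideanSpace ℝ (Fin d × Fin d)) := e '' D with hK
  have hKconv : Convex ℝ K := hconv.linear_image e.toLinearMap
  have hvK : e PA ∈ K := ⟨PA, hPA, rfl⟩
  have hKne : Nonempty K := ⟨⟨e PA, hvK⟩⟩
  have key : ∀ X Y : Mat d, ‖e X - e Y‖ = frobNorm (X - Y) := by
    intro X Y
    have h : e (X - Y) = e X - e Y := map_sub e X Y
    rw [← h]
    exact norm_matE _
  have hinf : ‖e A - e PA‖ = ⨅ w : K, ‖e A - w‖ := by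
    apply le_antisymm
    · apply le_ciInf
      rintro ⟨w, B, hB, rfl⟩
      show ‖e A - e PA‖ ≤ ‖e A - e B‖
      rw [key, key]
      exact hproj B hB
    · refine ciInf_le ⟨0, ?_⟩ (⟨e PA, hvK⟩ : K)
      rintro r ⟨w, rfl⟩
      exact norm_nonneg _
  have hker := (norm_eq_iInf_iff_real_inner_le_zero hKconv hvK).mp hinf
  have hle : (inner ℝ (e A - e PA) (e Γ - e PA) : ℝ) ≤ 0 := hker (e Γ) ⟨Γ, hΓ, rfl⟩
  have hsq : ‖e PA - e Γ‖ ^ 2 ≤ ‖e A - e Γ‖ ^ 2 := by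
    have hexp : ‖e A - e Γ‖ ^ 2
        = ‖e A - e PA‖ ^ 2 - 2 * (inner ℝ (e A - e PA) (e Γ - e PA) : ℝ) + ‖e Γ - e PA‖ ^ 2 := by
      have hn := norm_sub_sq_real (e A - e PA) (e Γ - e PA)
      have h : e A - e Γ = (e A - e PA) - (e Γ - e PA) := by abel
      rw [h, hn]
    rw [norm_sub_rev (e Γ) (e PA)] at hexp
    have hpos : (0:ℝ) ≤ ‖e A - e PA‖ ^ 2 := sq_nonneg _
    linarith [hle, hpos, hexp]
  have := le_of_sq_le_sq (norm_nonneg _) (norm_nonneg _) hsq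
  rwa [key, key] at this

/-- The Powers–Størmer-type inequality: `‖√P − √G‖² ≤ ‖P − G‖_F`. -/
lemma opnorm_sqrt_sub {d : ℕ} {P G : Mat d} (hP : P.PosSemidef) (hG : G.PosSemidef) :
    matOpNorm (CFC.sqrt P - CFC.sqrt G) ^ 2 ≤ frobNorm (P - G) := by
  rcases Nat.eq_zero_or_pos d with hd | hd
  · subst hd
    have hT : LinearMap.toContinuousLinearMap (Matrix.toEuclideanLin (CFC.sqrt P - CFC.sqrt G)) = 0 := by
      ext x i
      exact absurd i.2 (by omega)
    rw [matOpNorm, hT, norm_zero]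
    simpa using frob_nonneg (P - G)
  have : Nonempty (Fin d) := ⟨⟨0, hd⟩⟩
  set S1 := CFC.sqrt P with hS1def
  set S2 := CFC.sqrt G with hS2def
  have hS1 : S1.PosSemidef := Matrix.nonneg_iff_posSemidef.mp (CFC.sqrt_nonneg P)
  have hS2 : S2.PosSemidef := Matrix.nonneg_iff_posSemidef.mp (CFC.sqrt_nonneg G)
  set C := S1 - S2 with hCdef
  have hC : C.IsHermitian := hS1.1.sub hS2.1
  set b := hC.eigenvectorBasis with hbdef
  set ev := hC.eigenvalues with hevdef
  obtain ⟨i, hi⟩ := Finite.exists_max (fun j => |ev j|)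
  -- Step A : `matOpNorm C ≤ |ev i|`
  have hrepr : ∀ (v : EuclideanSpace ℝ (Fin d)) (j : Fin d),
      b.repr (Matrix.toEuclideanLin C v) j = ev j * b.repr v j := by
    intro v j
    have hsym := (Matrix.isHermitian_iff_isSymmetric.mp hC) (b j) v
    rw [b.repr_apply_apply, b.repr_apply_apply, ← hsym]
    have hTj : Matrix.toEuclideanLin C (b j) = (ev j : ℝ) • (b j) := by
      apply (WithLp.equiv 2 _).injective
      simpa [Matrix.toEuclideanLin_apply] using hC.mulVec_eigenvectorBasis j
    rw [hTj, real_inner_smul_left]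
  have hstepA : matOpNorm C ≤ |ev i| := by
    rw [matOpNorm]
    apply ContinuousLinearMap.opNorm_le_bound _ (abs_nonneg _)
    intro x
    simp only [LinearMap.coe_toContinuousLinearMap']
    set y := Matrix.toEuclideanLin C x with hydef
    have hy2 : ‖y‖ ^ 2 = ∑ j, (ev j * b.repr x j) ^ 2 := by
      rw [← b.repr.norm_map y, EuclideanSpace.norm_eq,
        Real.sq_sqrt (Finset.sum_nonneg fun _ _ => sq_nonneg _)]
      apply Finset.sum_congr rfl
      intro j _
      rw [Real.norm_eq_abs, sq_abs, hrepr x j]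
    have hx2 : ‖x‖ ^ 2 = ∑ j, (b.repr x j) ^ 2 := by
      rw [← b.repr.norm_map x, EuclideanSpace.norm_eq,
        Real.sq_sqrt (Finset.sum_nonneg fun _ _ => sq_nonneg _)]
      apply Finset.sum_congr rfl
      intro j _
      rw [Real.norm_eq_abs, sq_abs]
    have hcomp : ‖y‖ ^ 2 ≤ (|ev i| * ‖x‖) ^ 2 := by
      rw [hy2, mul_pow, hx2, Finset.mul_sum]
      apply Finset.sum_le_sum
      intro j _
      have h1 : (ev j) ^ 2 ≤ |ev i| ^ 2 := by
        rw [← sq_abs (ev j)]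
        exact pow_le_pow_left₀ (abs_nonneg _) (hi j) 2
      calc (ev j * b.repr x j) ^ 2 = ev j ^ 2 * (b.repr x j) ^ 2 := by ring
        _ ≤ |ev i| ^ 2 * (b.repr x j) ^ 2 :=
          mul_le_mul_of_nonneg_right h1 (sq_nonneg _)
    exact le_of_sq_le_sq (norm_nonneg _) (mul_nonneg (abs_nonneg _) (norm_nonneg _)) hcomp
  -- Step B : `(ev i)² ≤ frobNorm (P - G)`
  set x : Fin d → ℝ := ⇑(b i) with hxdef
  have hx1 : ∑ j, x j ^ 2 = 1 := by
    have hnorm : ‖b i‖ = 1 := b.orthonormal.1 i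
    rw [EuclideanSpace.norm_eq] at hnorm
    have := congrArg (· ^ 2) hnorm
    simp only [one_pow] at this
    rw [Real.sq_sqrt (Finset.sum_nonneg fun _ _ => sq_nonneg _)] at this
    rw [← this]
    apply Finset.sum_congr rfl
    intro j _
    rw [Real.norm_eq_abs, sq_abs]
  have hCx : C *ᵥ x = ev i • x := hC.mulVec_eigenvectorBasis i
  set u := S1 *ᵥ x with hudef
  set v := S2 *ᵥ x with hvdef
  have huv : u - v = ev i • x := by
    rw [hudef, hvdef, ← Matrix.sub_mulVec]; exact hCx
  have hPdot : x ⬝ᵥ (P *ᵥ x) = u ⬝ᵥ u := by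
    conv_lhs => rw [← CFC.sqrt_mul_sqrt_self P hP.nonneg]
    rw [← Matrix.mulVec_mulVec, dot_symm hS1.1]
  have hGdot : x ⬝ᵥ (G *ᵥ x) = v ⬝ᵥ v := by
    conv_lhs => rw [← CFC.sqrt_mul_sqrt_self G hG.nonneg]
    rw [← Matrix.mulVec_mulVec, dot_symm hS2.1]
  set q := x ⬝ᵥ ((S1 + S2) *ᵥ x) with hqdef
  set a1 := x ⬝ᵥ (S1 *ᵥ x) with ha1
  set a2 := x ⬝ᵥ (S2 *ᵥ x) with ha2
  have ha1n : 0 ≤ a1 := psd_dot_nonneg hS1 x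
  have ha2n : 0 ≤ a2 := psd_dot_nonneg hS2 x
  have hq : q = a1 + a2 := by
    rw [hqdef, Matrix.add_mulVec, dotProduct_add]
  have hlam : a1 - a2 = ev i := by
    have : x ⬝ᵥ (C *ᵥ x) = ev i * (x ⬝ᵥ x) := by
      rw [hCx, dotProduct_smul]; rfl
    have hxx : x ⬝ᵥ x = 1 := by
      rw [dotProduct]
      simpa [pow_two] using hx1
    rw [hCdef, Matrix.sub_mulVec, dotProduct_sub] at this
    rw [ha1, ha2, this, hxx, mul_one]
  have hmain : x ⬝ᵥ ((P - G) *ᵥ x) = ev i * q := by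
    rw [Matrix.sub_mulVec, dotProduct_sub, hPdot, hGdot]
    have hexp : u ⬝ᵥ u - v ⬝ᵥ v = (u - v) ⬝ᵥ (u + v) := by
      rw [sub_dotProduct, dotProduct_add, dotProduct_add,
        dotProduct_comm v u]
      ring
    rw [hexp, huv, smul_dotProduct]
    have : x ⬝ᵥ (u + v) = q := by
      rw [hqdef, Matrix.add_mulVec, dotProduct_add, hudef, hvdef]
    rw [this]; rfl
  have habs : |ev i| ≤ q := by
    rw [hq]
    rcases abs_cases (ev i) with ⟨h, _⟩ | ⟨h, _⟩ <;> rw [h] <;> linarith [hlam]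
  have hstepB : ev i ^ 2 ≤ frobNorm (P - G) := by
    have hb := abs_dot_mulVec_le_frob (P - G) x hx1
    rw [hmain, abs_mul] at hb
    have hqn : 0 ≤ q := le_trans (abs_nonneg _) habs
    have h1 : ev i ^ 2 ≤ |ev i| * |q| := by
      rw [abs_of_nonneg hqn, ← sq_abs]
      nlinarith [abs_nonneg (ev i), habs]
    exact le_trans h1 hb
  calc matOpNorm C ^ 2 ≤ |ev i| ^ 2 := by
        apply pow_le_pow_left₀ (norm_nonneg _) hstepA
    _ = ev i ^ 2 := sq_abs _
    _ ≤ frobNorm (P - G) := hstepB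

end SqrtProjAux

/-- step 4 of the proof of Proposition 3.8: if `Π_D A` is the metric
projection (w.r.t. the Frobenius norm) of a symmetric matrix `A` onto the nonempty convex
compact set `D ⊆ S^d_+`, then for every `Γ ∈ D`,
`‖√(Π_D A) − √Γ‖² ≤ ‖A − Γ‖_F` (operator norm on the left). -/
theorem sqrt_proj_dist_le_frobenius
    {d : ℕ} (D : Set (Mat d)) (hne : D.Nonempty) (hconv : Convex ℝ D) (hcomp : IsCompact D)
    (hpsd : ∀ A ∈ D, A.PosSemidef)
    (A : Mat d) (hA : A.IsSymm)
    (PA : Mat d) (hPA : PA ∈ D)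
    (hproj : ∀ B ∈ D, frobNorm (A - PA) ≤ frobNorm (A - B))
    (Γ : Mat d) (hΓ : Γ ∈ D) :
    matOpNorm (CFC.sqrt PA - CFC.sqrt Γ) ^ 2 ≤ frobNorm (A - Γ) := by
  calc matOpNorm (CFC.sqrt PA - CFC.sqrt Γ) ^ 2
      ≤ frobNorm (PA - Γ) := SqrtProjAux.opnorm_sqrt_sub (hpsd PA hPA) (hpsd Γ hΓ)
    _ ≤ frobNorm (A - Γ) := SqrtProjAux.frob_proj_le D hconv A PA Γ hPA hΓ hproj

end
end
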